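/- Let u : ℝ² → ℝ² be twice continuously differentiable with compact support, and let w : ℝ² → ℝ² be continuously differentiable with div w = 0 everywhere. Then ∫_{ℝ²} Σ_{j=1}^{2} Δu_j(x) (∇u_j(x) · w(x)) dx = - ∫_{ℝ²} Σ_{j,k,ℓ=1}^{2} (∂_k u_j)(x) (∂_ℓ u_j)(x) (∂_k w_ℓ)(x) dx. -/

import Mathlib

open MeasureTheory

/-- Partial derivative in direction `i` of a scalar function on `ℝ²`. -/
noncomputable def pd (i : Fin 2) (f : (Fin 2 → ℝ) → ℝ) (x : Fin 2 → ℝ) : ℝ :=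
  fderiv ℝ f x (Pi.single i 1)

/-- Laplacian of a scalar function on `ℝ²`. -/
noncomputable def lap (f : (Fin 2 → ℝ) → ℝ) (x : Fin 2 → ℝ) : ℝ :=
  pd 0 (pd 0 f) x + pd 1 (pd 1 f) x

lemma pd_continuous {F : (Fin 2 → ℝ) → ℝ} (hF : ContDiff ℝ 1 F) (i : Fin 2) :
    Continuous (pd i F) :=
  ((hF.fderiv_right (m := 0) (by norm_num)).clm_apply contDiff_const).continuous

lemma pd_contDiff_one {F : (Fin 2 → ℝ) → ℝ} (hF : ContDiff ℝ 2 F) (i : Fin 2) :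
    ContDiff ℝ 1 (pd i F) :=
  (hF.fderiv_right (m := 1) (by norm_num)).clm_apply contDiff_const

lemma pd_hasCompactSupport {F : (Fin 2 → ℝ) → ℝ} (hF : HasCompactSupport F) (i : Fin 2) :
    HasCompactSupport (pd i F) :=
  (hF.fderiv ℝ).comp_left (g := fun L : (Fin 2 → ℝ) →L[ℝ] ℝ => L (Pi.single i 1)) rfl

lemma pd_mul {F G : (Fin 2 → ℝ) → ℝ} {x : Fin 2 → ℝ} (i : Fin 2)
    (hF : DifferentiableAt ℝ F x) (hG : DifferentiableAt ℝ G x) :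
    pd i (fun y => F y * G y) x = pd i F x * G x + F x * pd i G x := by
  unfold pd
  rw [fderiv_fun_mul hF hG]
  simp only [ContinuousLinearMap.add_apply, ContinuousLinearMap.smul_apply, smul_eq_mul]
  ring

lemma pd_add {F G : (Fin 2 → ℝ) → ℝ} {x : Fin 2 → ℝ} (i : Fin 2)
    (hF : DifferentiableAt ℝ F x) (hG : DifferentiableAt ℝ G x) :
    pd i (fun y => F y + G y) x = pd i F x + pd i G x := by
  unfold pd
  rw [fderiv_fun_add hF hG]
  simp

lemma pd_sub {F G : (Fin 2 → ℝ) → ℝ} {x : Fin 2 → ℝ} (i : Fin 2)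
    (hF : DifferentiableAt ℝ F x) (hG : DifferentiableAt ℝ G x) :
    pd i (fun y => F y - G y) x = pd i F x - pd i G x := by
  unfold pd
  rw [fderiv_fun_sub hF hG]
  simp

lemma pd_const {x : Fin 2 → ℝ} (i : Fin 2) (c : ℝ) : pd i (fun _ => c) x = 0 := by
  unfold pd
  rw [fderiv_fun_const]
  simp

lemma pd_comm {F : (Fin 2 → ℝ) → ℝ} (hF : ContDiff ℝ 2 F) (x : Fin 2 → ℝ) (k l : Fin 2) :
    pd k (pd l F) x = pd l (pd k F) x := by
  have hd1 : Differentiable ℝ F := hF.differentiable (by norm_num)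
  have hd : ∀ y, HasFDerivAt F (fderiv ℝ F y) y := fun y => (hd1 y).hasFDerivAt
  have hF' : ContDiff ℝ 1 (fderiv ℝ F) := hF.fderiv_right (m := 1) (by norm_num)
  have h2 : HasFDerivAt (fderiv ℝ F) (fderiv ℝ (fderiv ℝ F) x) x :=
    (hF'.differentiable one_ne_zero x).hasFDerivAt
  have hc : ∀ (v : Fin 2 → ℝ) (m : Fin 2),
      fderiv ℝ (fun y => fderiv ℝ F y v) x (Pi.single m 1)
        = fderiv ℝ (fderiv ℝ F) x (Pi.single m 1) v := by
    intro v m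
    rw [fderiv_clm_apply (hF'.differentiable one_ne_zero x) (differentiableAt_const v)]
    simp
  have e1 : pd k (pd l F) x
      = fderiv ℝ (fderiv ℝ F) x (Pi.single k 1) (Pi.single l 1) := hc _ _
  have e2 : pd l (pd k F) x
      = fderiv ℝ (fderiv ℝ F) x (Pi.single l 1) (Pi.single k 1) := hc _ _
  rw [e1, e2, second_derivative_symmetric hd h2 (Pi.single k 1) (Pi.single l 1)]

lemma integral_pd_eq_zero (i : Fin 2) (h : (Fin 2 → ℝ) → ℝ)
    (hh : ContDiff ℝ 1 h) (hsupp : HasCompactSupport h) :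
    ∫ x : Fin 2 → ℝ, pd i h x = 0 := by
  obtain ⟨R0, hR0⟩ := hsupp.isCompact.isBounded.subset_closedBall 0
  set R : ℝ := max R0 0 with hRdef
  have hR : tsupport h ⊆ Metric.closedBall 0 R :=
    hR0.trans (Metric.closedBall_subset_closedBall (le_max_left _ _))
  have hRnn : (0:ℝ) ≤ R := le_max_right _ _
  set a : Fin 2 → ℝ := fun _ => -(R+1) with ha
  set b : Fin 2 → ℝ := fun _ => (R+1) with hb
  have hle : a ≤ b := fun j => by simp only [ha, hb]; linarith
  have hout : ∀ x : Fin 2 → ℝ, R < ‖x‖ → x ∉ tsupport h := by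
    intro x hx hmem
    exact absurd (mem_closedBall_zero_iff.mp (hR hmem)) (not_le.mpr hx)
  have hbox : ∀ x : Fin 2 → ℝ, x ∉ Set.Icc a b → R < ‖x‖ := by
    intro x hx
    simp only [Set.mem_Icc, Pi.le_def, not_and_or, not_forall, not_le, ha, hb] at hx
    obtain ⟨j, hj⟩ | ⟨j, hj⟩ := hx
    · have : R + 1 ≤ |x j| := le_abs.mpr (Or.inr (by linarith))
      calc R < R + 1 := by linarith
        _ ≤ |x j| := this
        _ = ‖x j‖ := (Real.norm_eq_abs _).symm
        _ ≤ ‖x‖ := norm_le_pi_norm x j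
    · have : R + 1 ≤ |x j| := le_abs.mpr (Or.inl (by linarith))
      calc R < R + 1 := by linarith
        _ ≤ |x j| := this
        _ = ‖x j‖ := (Real.norm_eq_abs _).symm
        _ ≤ ‖x‖ := norm_le_pi_norm x j
  have hfd0 : ∀ x : Fin 2 → ℝ, x ∉ Set.Icc a b → pd i h x = 0 := by
    intro x hx
    have hx' : x ∉ tsupport (fderiv ℝ h) :=
      fun hmem => hout x (hbox x hx) (tsupport_fderiv_subset ℝ hmem)
    have : fderiv ℝ h x = 0 := image_eq_zero_of_notMem_tsupport hx'
    simp [pd, this]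
  have hsum : ∀ x : Fin 2 → ℝ,
      (∑ k : Fin 2, (if k = i then fderiv ℝ h x else 0) (Pi.single k 1)) = pd i h x := by
    intro x
    fin_cases i <;> simp [Fin.sum_univ_two, pd]
  have hcont : Continuous (pd i h) := pd_continuous hh i
  have key := integral_divergence_of_hasFDerivAt_off_countable' (n := 1) a b hle
    (fun k => if k = i then h else fun _ => 0)
    (fun k x => if k = i then fderiv ℝ h x else 0) ∅ Set.countable_empty
    (by
      intro k
      by_cases hk : k = i
      · simp only [hk, if_pos rfl]
        exact hh.continuous.continuousOn
      · simp only [if_neg hk]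
        exact continuousOn_const)
    (by
      intro x _ k
      by_cases hk : k = i
      · simp only [hk, if_pos rfl]
        exact (hh.differentiable one_ne_zero x).hasFDerivAt
      · simp only [if_neg hk]
        exact hasFDerivAt_const 0 x)
    (by
      have : (fun x : Fin 2 → ℝ =>
          ∑ k : Fin 2, (if k = i then fderiv ℝ h x else 0) (Pi.single k 1)) = pd i h :=
        funext hsum
      rw [this]
      exact hcont.continuousOn.integrableOn_compact isCompact_Icc)
  simp_rw [hsum] at key
  rw [← setIntegral_eq_integral_of_forall_compl_eq_zero hfd0, key]
  apply Finset.sum_eq_zero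
  intro k _
  by_cases hk : k = i
  · subst hk
    have hz : ∀ (c : ℝ), R + 1 ≤ |c| → ∀ y : Fin 1 → ℝ, h (k.insertNth c y : Fin 2 → ℝ) = 0 := by
      intro c hcabs y
      apply image_eq_zero_of_notMem_tsupport
      apply hout
      calc R < R + 1 := by linarith
        _ ≤ |c| := hcabs
        _ = ‖(k.insertNth c y : Fin 2 → ℝ) k‖ := by rw [Fin.insertNth_apply_same, Real.norm_eq_abs]
        _ ≤ ‖(k.insertNth c y : Fin 2 → ℝ)‖ := norm_le_pi_norm _ k
    have hz1 : ∀ y : Fin 1 → ℝ, h (k.insertNth (b k) y : Fin 2 → ℝ) = 0 := by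
      intro y; apply hz; simp only [hb]
      rw [abs_of_nonneg (show (0:ℝ) ≤ R + 1 by linarith)]
    have hz2 : ∀ y : Fin 1 → ℝ, h (k.insertNth (a k) y : Fin 2 → ℝ) = 0 := by
      intro y; apply hz; simp only [ha]
      rw [abs_neg, abs_of_nonneg (show (0:ℝ) ≤ R + 1 by linarith)]
    simp only [if_pos rfl]
    simp [hz1, hz2]
  · simp [hk]

lemma hcs_sub {f g : (Fin 2 → ℝ) → ℝ} (hf : HasCompactSupport f)
    (hg : HasCompactSupport g) : HasCompactSupport (fun y => f y - g y) :=
  hf.comp₂_left hg (sub_zero 0)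

lemma key_component (F : (Fin 2 → ℝ) → ℝ) (w : (Fin 2 → ℝ) → Fin 2 → ℝ)
    (hF : ContDiff ℝ 2 F) (hFc : HasCompactSupport F) (hw : ContDiff ℝ 1 w)
    (hdiv : ∀ x, pd 0 (fun y => w y 0) x + pd 1 (fun y => w y 1) x = 0) :
    (∫ x : Fin 2 → ℝ,
        (pd 0 (pd 0 F) x + pd 1 (pd 1 F) x) * (pd 0 F x * w x 0 + pd 1 F x * w x 1))
      = - ∫ x : Fin 2 → ℝ,
          (pd 0 F x * pd 0 F x * pd 0 (fun y => w y 0) x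
            + pd 0 F x * pd 1 F x * pd 0 (fun y => w y 1) x
          + (pd 1 F x * pd 0 F x * pd 1 (fun y => w y 0) x
            + pd 1 F x * pd 1 F x * pd 1 (fun y => w y 1) x)) := by
  have hw0 : ContDiff ℝ 1 (fun y => w y 0) := contDiff_pi.mp hw 0
  have hw1 : ContDiff ℝ 1 (fun y => w y 1) := contDiff_pi.mp hw 1
  have hp0 : ContDiff ℝ 1 (pd 0 F) := pd_contDiff_one hF 0
  have hp1 : ContDiff ℝ 1 (pd 1 F) := pd_contDiff_one hF 1
  have dp0 : Differentiable ℝ (pd 0 F) := hp0.differentiable one_ne_zero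
  have dp1 : Differentiable ℝ (pd 1 F) := hp1.differentiable one_ne_zero
  have dw0 : Differentiable ℝ (fun y => w y 0) := hw0.differentiable one_ne_zero
  have dw1 : Differentiable ℝ (fun y => w y 1) := hw1.differentiable one_ne_zero
  have sp0 : HasCompactSupport (pd 0 F) := pd_hasCompactSupport hFc 0
  have sp1 : HasCompactSupport (pd 1 F) := pd_hasCompactSupport hFc 1
  -- the vector field V
  set V0 : (Fin 2 → ℝ) → ℝ := fun y =>
    pd 0 F y * (pd 0 F y * w y 0 + pd 1 F y * w y 1)
      - 1/2 * ((pd 0 F y * pd 0 F y + pd 1 F y * pd 1 F y) * w y 0) with hV0def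
  set V1 : (Fin 2 → ℝ) → ℝ := fun y =>
    pd 1 F y * (pd 0 F y * w y 0 + pd 1 F y * w y 1)
      - 1/2 * ((pd 0 F y * pd 0 F y + pd 1 F y * pd 1 F y) * w y 1) with hV1def
  have hV0 : ContDiff ℝ 1 V0 :=
    (hp0.mul ((hp0.mul hw0).add (hp1.mul hw1))).sub
      (contDiff_const.mul (((hp0.mul hp0).add (hp1.mul hp1)).mul hw0))
  have hV1 : ContDiff ℝ 1 V1 :=
    (hp1.mul ((hp0.mul hw0).add (hp1.mul hw1))).sub
      (contDiff_const.mul (((hp0.mul hp0).add (hp1.mul hp1)).mul hw1))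
  have hV0c : HasCompactSupport V0 :=
    hcs_sub (sp0.mul_right) (((sp0.mul_right.add sp1.mul_right).mul_right).mul_left)
  have hV1c : HasCompactSupport V1 :=
    hcs_sub (sp1.mul_right) (((sp0.mul_right.add sp1.mul_right).mul_right).mul_left)
  have h0 : ∫ x : Fin 2 → ℝ, pd 0 V0 x = 0 := integral_pd_eq_zero 0 V0 hV0 hV0c
  have h1 : ∫ x : Fin 2 → ℝ, pd 1 V1 x = 0 := integral_pd_eq_zero 1 V1 hV1 hV1c
  have hpoint : ∀ x : Fin 2 → ℝ,
      pd 0 V0 x + pd 1 V1 x =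
        (pd 0 (pd 0 F) x + pd 1 (pd 1 F) x) * (pd 0 F x * w x 0 + pd 1 F x * w x 1)
        + ((pd 0 F x * pd 0 F x * pd 0 (fun y => w y 0) x
            + pd 0 F x * pd 1 F x * pd 0 (fun y => w y 1) x)
          + (pd 1 F x * pd 0 F x * pd 1 (fun y => w y 0) x
            + pd 1 F x * pd 1 F x * pd 1 (fun y => w y 1) x)) := by
    intro x
    rw [hV0def, hV1def]
    rw [pd_sub 0 ((dp0 x).fun_mul (((dp0 x).fun_mul (dw0 x)).fun_add ((dp1 x).fun_mul (dw1 x))))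
        ((differentiableAt_const _).fun_mul ((((dp0 x).fun_mul (dp0 x)).fun_add ((dp1 x).fun_mul (dp1 x))).fun_mul (dw0 x)))]
    rw [pd_sub 1 ((dp1 x).fun_mul (((dp0 x).fun_mul (dw0 x)).fun_add ((dp1 x).fun_mul (dw1 x))))
        ((differentiableAt_const _).fun_mul ((((dp0 x).fun_mul (dp0 x)).fun_add ((dp1 x).fun_mul (dp1 x))).fun_mul (dw1 x)))]
    rw [pd_mul 0 (dp0 x) (((dp0 x).fun_mul (dw0 x)).fun_add ((dp1 x).fun_mul (dw1 x)))]
    rw [pd_mul 1 (dp1 x) (((dp0 x).fun_mul (dw0 x)).fun_add ((dp1 x).fun_mul (dw1 x)))]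
    rw [pd_add 0 ((dp0 x).fun_mul (dw0 x)) ((dp1 x).fun_mul (dw1 x))]
    rw [pd_add 1 ((dp0 x).fun_mul (dw0 x)) ((dp1 x).fun_mul (dw1 x))]
    rw [pd_mul 0 (dp0 x) (dw0 x), pd_mul 0 (dp1 x) (dw1 x),
        pd_mul 1 (dp0 x) (dw0 x), pd_mul 1 (dp1 x) (dw1 x)]
    rw [pd_mul 0 (differentiableAt_const _) ((((dp0 x).fun_mul (dp0 x)).fun_add ((dp1 x).fun_mul (dp1 x))).fun_mul (dw0 x))]
    rw [pd_mul 1 (differentiableAt_const _) ((((dp0 x).fun_mul (dp0 x)).fun_add ((dp1 x).fun_mul (dp1 x))).fun_mul (dw1 x))]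
    rw [pd_mul 0 (((dp0 x).fun_mul (dp0 x)).fun_add ((dp1 x).fun_mul (dp1 x))) (dw0 x)]
    rw [pd_mul 1 (((dp0 x).fun_mul (dp0 x)).fun_add ((dp1 x).fun_mul (dp1 x))) (dw1 x)]
    rw [pd_add 0 ((dp0 x).fun_mul (dp0 x)) ((dp1 x).fun_mul (dp1 x))]
    rw [pd_add 1 ((dp0 x).fun_mul (dp0 x)) ((dp1 x).fun_mul (dp1 x))]
    rw [pd_mul 0 (dp0 x) (dp0 x), pd_mul 0 (dp1 x) (dp1 x),
        pd_mul 1 (dp0 x) (dp0 x), pd_mul 1 (dp1 x) (dp1 x)]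
    rw [pd_const 0, pd_const 1]
    rw [pd_comm hF x 1 0]
    have h11 : pd 1 (fun y => w y 1) x = - pd 0 (fun y => w y 0) x := by
      linarith [hdiv x]
    rw [h11]
    ring
  -- integrability
  have cw0 : Continuous (fun y => w y 0) := hw0.continuous
  have cw1 : Continuous (fun y => w y 1) := hw1.continuous
  have cp0 : Continuous (pd 0 F) := hp0.continuous
  have cp1 : Continuous (pd 1 F) := hp1.continuous
  have cpp00 : Continuous (pd 0 (pd 0 F)) := pd_continuous hp0 0
  have cpp11 : Continuous (pd 1 (pd 1 F)) := pd_continuous hp1 1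
  have cpw : ∀ k l : Fin 2, Continuous (pd k (fun y => w y l)) := fun k l =>
    pd_continuous (contDiff_pi.mp hw l) k
  have iL : Integrable (fun x : Fin 2 → ℝ =>
      (pd 0 (pd 0 F) x + pd 1 (pd 1 F) x) * (pd 0 F x * w x 0 + pd 1 F x * w x 1)) := by
    apply Continuous.integrable_of_hasCompactSupport
    · exact (cpp00.add cpp11).mul ((cp0.mul cw0).add (cp1.mul cw1))
    · exact ((pd_hasCompactSupport sp0 0).add (pd_hasCompactSupport sp1 1)).mul_right
  have iR : Integrable (fun x : Fin 2 → ℝ =>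
      (pd 0 F x * pd 0 F x * pd 0 (fun y => w y 0) x
        + pd 0 F x * pd 1 F x * pd 0 (fun y => w y 1) x)
      + (pd 1 F x * pd 0 F x * pd 1 (fun y => w y 0) x
        + pd 1 F x * pd 1 F x * pd 1 (fun y => w y 1) x)) := by
    apply Continuous.integrable_of_hasCompactSupport
    · exact (((cp0.mul cp0).mul (cpw 0 0)).add ((cp0.mul cp1).mul (cpw 0 1))).add
        (((cp1.mul cp0).mul (cpw 1 0)).add ((cp1.mul cp1).mul (cpw 1 1)))
    · exact (((sp0.mul_right).mul_right).add ((sp0.mul_right).mul_right)).add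
        (((sp1.mul_right).mul_right).add ((sp1.mul_right).mul_right))
  have iV0 : Integrable (fun x : Fin 2 → ℝ => pd 0 V0 x) := by
    apply Continuous.integrable_of_hasCompactSupport
    · exact pd_continuous hV0 0
    · exact pd_hasCompactSupport hV0c 0
  have iV1 : Integrable (fun x : Fin 2 → ℝ => pd 1 V1 x) := by
    apply Continuous.integrable_of_hasCompactSupport
    · exact pd_continuous hV1 1
    · exact pd_hasCompactSupport hV1c 1
  have hsumint :
      (∫ x : Fin 2 → ℝ,
        (pd 0 (pd 0 F) x + pd 1 (pd 1 F) x) * (pd 0 F x * w x 0 + pd 1 F x * w x 1))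
      + (∫ x : Fin 2 → ℝ,
          (pd 0 F x * pd 0 F x * pd 0 (fun y => w y 0) x
            + pd 0 F x * pd 1 F x * pd 0 (fun y => w y 1) x)
          + (pd 1 F x * pd 0 F x * pd 1 (fun y => w y 0) x
            + pd 1 F x * pd 1 F x * pd 1 (fun y => w y 1) x)) = 0 := by
    rw [← integral_add iL iR]
    have heq : (fun x : Fin 2 → ℝ =>
        (pd 0 (pd 0 F) x + pd 1 (pd 1 F) x) * (pd 0 F x * w x 0 + pd 1 F x * w x 1)
        + ((pd 0 F x * pd 0 F x * pd 0 (fun y => w y 0) x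
            + pd 0 F x * pd 1 F x * pd 0 (fun y => w y 1) x)
          + (pd 1 F x * pd 0 F x * pd 1 (fun y => w y 0) x
            + pd 1 F x * pd 1 F x * pd 1 (fun y => w y 1) x)))
        = fun x => pd 0 V0 x + pd 1 V1 x := funext fun x => (hpoint x).symm
    rw [heq, integral_add iV0 iV1, h0, h1, add_zero]
  linarith [hsumint]

lemma integrable_LHSI (F : (Fin 2 → ℝ) → ℝ) (w : (Fin 2 → ℝ) → Fin 2 → ℝ)
    (hF : ContDiff ℝ 2 F) (hFc : HasCompactSupport F) (hw : ContDiff ℝ 1 w) :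
    Integrable (fun x : Fin 2 → ℝ =>
      (pd 0 (pd 0 F) x + pd 1 (pd 1 F) x) * (pd 0 F x * w x 0 + pd 1 F x * w x 1)) := by
  have hp0 := pd_contDiff_one hF 0
  have hp1 := pd_contDiff_one hF 1
  apply Continuous.integrable_of_hasCompactSupport
  · exact ((pd_continuous hp0 0).add (pd_continuous hp1 1)).mul
      (((hp0.continuous).mul ((contDiff_pi.mp hw 0).continuous)).add
        ((hp1.continuous).mul ((contDiff_pi.mp hw 1).continuous)))
  · exact ((pd_hasCompactSupport (pd_hasCompactSupport hFc 0) 0).add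
      (pd_hasCompactSupport (pd_hasCompactSupport hFc 1) 1)).mul_right

lemma integrable_RHSI (F : (Fin 2 → ℝ) → ℝ) (w : (Fin 2 → ℝ) → Fin 2 → ℝ)
    (hF : ContDiff ℝ 2 F) (hFc : HasCompactSupport F) (hw : ContDiff ℝ 1 w) :
    Integrable (fun x : Fin 2 → ℝ =>
      (pd 0 F x * pd 0 F x * pd 0 (fun y => w y 0) x
        + pd 0 F x * pd 1 F x * pd 0 (fun y => w y 1) x)
      + (pd 1 F x * pd 0 F x * pd 1 (fun y => w y 0) x
        + pd 1 F x * pd 1 F x * pd 1 (fun y => w y 1) x)) := by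
  have cp0 := (pd_contDiff_one hF 0).continuous
  have cp1 := (pd_contDiff_one hF 1).continuous
  have cpw : ∀ k l : Fin 2, Continuous (pd k (fun y => w y l)) := fun k l =>
    pd_continuous (contDiff_pi.mp hw l) k
  have sp0 := pd_hasCompactSupport hFc 0
  have sp1 := pd_hasCompactSupport hFc 1
  apply Continuous.integrable_of_hasCompactSupport
  · exact (((cp0.mul cp0).mul (cpw 0 0)).add ((cp0.mul cp1).mul (cpw 0 1))).add
      (((cp1.mul cp0).mul (cpw 1 0)).add ((cp1.mul cp1).mul (cpw 1 1)))
  · exact (((sp0.mul_right).mul_right).add ((sp0.mul_right).mul_right)).add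
      (((sp1.mul_right).mul_right).add ((sp1.mul_right).mul_right))

/-- `∫ Σ_j Δu_j (∇u_j · w) = -∫ Σ_{j,k,ℓ} ∂_ku_j ∂_ℓu_j ∂_kw_ℓ` for compactly
supported `C²` `u` and divergence-free `C¹` `w`. -/
theorem laplacian_gradform_against_divfree
    (u w : (Fin 2 → ℝ) → (Fin 2 → ℝ))
    (hu : ContDiff ℝ 2 u) (hc : HasCompactSupport u)
    (hw : ContDiff ℝ 1 w)
    (hdiv : ∀ x, pd 0 (fun y => w y 0) x + pd 1 (fun y => w y 1) x = 0) :
    (∫ x : Fin 2 → ℝ,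
        ∑ j, lap (fun z => u z j) x * (∑ i, pd i (fun y => u y j) x * w x i))
    = - ∫ x : Fin 2 → ℝ,
        ∑ j, ∑ k, ∑ l,
          pd k (fun y => u y j) x * pd l (fun y => u y j) x
            * pd k (fun y => w y l) x := by
  have hf : ∀ j : Fin 2, ContDiff ℝ 2 (fun y => u y j) := fun j => contDiff_pi.mp hu j
  have hfc : ∀ j : Fin 2, HasCompactSupport (fun y => u y j) := fun j =>
    hc.comp_left (g := fun v : Fin 2 → ℝ => v j) rfl
  simp only [Fin.sum_univ_two, lap]
  rw [integral_add (integrable_LHSI _ w (hf 0) (hfc 0) hw) (integrable_LHSI _ w (hf 1) (hfc 1) hw),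
      integral_add (integrable_RHSI _ w (hf 0) (hfc 0) hw) (integrable_RHSI _ w (hf 1) (hfc 1) hw),
      key_component _ w (hf 0) (hfc 0) hw hdiv,
      key_component _ w (hf 1) (hfc 1) hw hdiv]
  ring
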